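/- Let M be the double star block matrix with xᵀy ≠ 0, zᵀw = 0, a, b ≠ 0, ζ := xᵀy + ab ≠ 0, and suppose q := aā + x*x ≠ 0 and α := ζζ̄ + aā·z*z ≠ 0. Then X = [[0, ζ̄α⁻¹xᵀ, ζ̄α⁻¹a, 0],[q⁻¹x̄, 0, 0, (qζ)⁻¹ax̄zᵀ],[āq⁻¹, 0, 0, (qζ)⁻¹aāzᵀ],[0, āα⁻¹z̄xᵀ, aāα⁻¹z̄, 0]] is the dual core EP inverse of M: M⁴X = M³, X²M = X, and (XM)* = XM. -/

import Mathlib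

open Matrix BigOperators

noncomputable section

abbrev Idx (m n : ℕ) := (Unit ⊕ Fin m) ⊕ (Unit ⊕ Fin n)

/-- 4×4 block builder for matrices indexed by a double star digraph vertex set:
the blocks correspond to the first center, the first star's leaves, the second
center and the second star's leaves, in this order. -/
def blk {m n : ℕ}
    (A11 : ℂ) (A12 : Fin m → ℂ) (A13 : ℂ) (A14 : Fin n → ℂ)
    (A21 : Fin m → ℂ) (A22 : Fin m → Fin m → ℂ) (A23 : Fin m → ℂ) (A24 : Fin m → Fin n → ℂ)
    (A31 : ℂ) (A32 : Fin m → ℂ) (A33 : ℂ) (A34 : Fin n → ℂ)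
    (A41 : Fin n → ℂ) (A42 : Fin n → Fin m → ℂ) (A43 : Fin n → ℂ) (A44 : Fin n → Fin n → ℂ) :
    Matrix (Idx m n) (Idx m n) ℂ :=
  Matrix.of fun i j =>
    match i, j with
    | .inl (.inl _), .inl (.inl _) => A11
    | .inl (.inl _), .inl (.inr k) => A12 k
    | .inl (.inl _), .inr (.inl _) => A13
    | .inl (.inl _), .inr (.inr k) => A14 k
    | .inl (.inr i'), .inl (.inl _) => A21 i'
    | .inl (.inr i'), .inl (.inr k) => A22 i' k
    | .inl (.inr i'), .inr (.inl _) => A23 i'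
    | .inl (.inr i'), .inr (.inr k) => A24 i' k
    | .inr (.inl _), .inl (.inl _) => A31
    | .inr (.inl _), .inl (.inr k) => A32 k
    | .inr (.inl _), .inr (.inl _) => A33
    | .inr (.inl _), .inr (.inr k) => A34 k
    | .inr (.inr i'), .inl (.inl _) => A41 i'
    | .inr (.inr i'), .inl (.inr k) => A42 i' k
    | .inr (.inr i'), .inr (.inl _) => A43 i'
    | .inr (.inr i'), .inr (.inr k) => A44 i' k

/-- The canonical matrix `[[0, xᵀ, a, 0],[y, 0, 0, 0],[b, 0, 0, zᵀ],[0, 0, w, 0]]`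
associated with a double star digraph. -/
def dsM {m n : ℕ} (a b : ℂ) (x y : Fin m → ℂ) (z w : Fin n → ℂ) :
    Matrix (Idx m n) (Idx m n) ℂ :=
  blk 0 x a (fun _ => 0)
      y (fun _ _ => 0) (fun _ => 0) (fun _ _ => 0)
      b (fun _ => 0) 0 z
      (fun _ => 0) (fun _ _ => 0) w (fun _ _ => 0)

/-- `xᵀy`. -/
def dotT {k : ℕ} (x y : Fin k → ℂ) : ℂ := ∑ i, x i * y i

/-- `x*x = ∑ conj xᵢ · xᵢ`. -/
def gram {k : ℕ} (x : Fin k → ℂ) : ℂ := ∑ i, star (x i) * x i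

end


section DsAux

variable {m n : ℕ}

section blkApply
variable (A11 : ℂ) (A12 : Fin m → ℂ) (A13 : ℂ) (A14 : Fin n → ℂ)
    (A21 : Fin m → ℂ) (A22 : Fin m → Fin m → ℂ) (A23 : Fin m → ℂ) (A24 : Fin m → Fin n → ℂ)
    (A31 : ℂ) (A32 : Fin m → ℂ) (A33 : ℂ) (A34 : Fin n → ℂ)
    (A41 : Fin n → ℂ) (A42 : Fin n → Fin m → ℂ) (A43 : Fin n → ℂ) (A44 : Fin n → Fin n → ℂ)
    (u v : Unit) (i : Fin m) (j : Fin m) (p : Fin n) (r : Fin n)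

local notation "B" => blk A11 A12 A13 A14 A21 A22 A23 A24 A31 A32 A33 A34 A41 A42 A43 A44

@[simp] lemma blk_a11 : B (.inl (.inl u)) (.inl (.inl v)) = A11 := rfl
@[simp] lemma blk_a12 : B (.inl (.inl u)) (.inl (.inr j)) = A12 j := rfl
@[simp] lemma blk_a13 : B (.inl (.inl u)) (.inr (.inl v)) = A13 := rfl
@[simp] lemma blk_a14 : B (.inl (.inl u)) (.inr (.inr r)) = A14 r := rfl
@[simp] lemma blk_a21 : B (.inl (.inr i)) (.inl (.inl v)) = A21 i := rfl
@[simp] lemma blk_a22 : B (.inl (.inr i)) (.inl (.inr j)) = A22 i j := rfl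
@[simp] lemma blk_a23 : B (.inl (.inr i)) (.inr (.inl v)) = A23 i := rfl
@[simp] lemma blk_a24 : B (.inl (.inr i)) (.inr (.inr r)) = A24 i r := rfl
@[simp] lemma blk_a31 : B (.inr (.inl u)) (.inl (.inl v)) = A31 := rfl
@[simp] lemma blk_a32 : B (.inr (.inl u)) (.inl (.inr j)) = A32 j := rfl
@[simp] lemma blk_a33 : B (.inr (.inl u)) (.inr (.inl v)) = A33 := rfl
@[simp] lemma blk_a34 : B (.inr (.inl u)) (.inr (.inr r)) = A34 r := rfl
@[simp] lemma blk_a41 : B (.inr (.inr p)) (.inl (.inl v)) = A41 p := rfl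
@[simp] lemma blk_a42 : B (.inr (.inr p)) (.inl (.inr j)) = A42 p j := rfl
@[simp] lemma blk_a43 : B (.inr (.inr p)) (.inr (.inl v)) = A43 p := rfl
@[simp] lemma blk_a44 : B (.inr (.inr p)) (.inr (.inr r)) = A44 p r := rfl
end blkApply

set_option maxHeartbeats 1000000 in
lemma blk_mul
    (A11 : ℂ) (A12 : Fin m → ℂ) (A13 : ℂ) (A14 : Fin n → ℂ)
    (A21 : Fin m → ℂ) (A22 : Fin m → Fin m → ℂ) (A23 : Fin m → ℂ) (A24 : Fin m → Fin n → ℂ)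
    (A31 : ℂ) (A32 : Fin m → ℂ) (A33 : ℂ) (A34 : Fin n → ℂ)
    (A41 : Fin n → ℂ) (A42 : Fin n → Fin m → ℂ) (A43 : Fin n → ℂ) (A44 : Fin n → Fin n → ℂ)
    (B11 : ℂ) (B12 : Fin m → ℂ) (B13 : ℂ) (B14 : Fin n → ℂ)
    (B21 : Fin m → ℂ) (B22 : Fin m → Fin m → ℂ) (B23 : Fin m → ℂ) (B24 : Fin m → Fin n → ℂ)
    (B31 : ℂ) (B32 : Fin m → ℂ) (B33 : ℂ) (B34 : Fin n → ℂ)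
    (B41 : Fin n → ℂ) (B42 : Fin n → Fin m → ℂ) (B43 : Fin n → ℂ) (B44 : Fin n → Fin n → ℂ) :
    blk A11 A12 A13 A14 A21 A22 A23 A24 A31 A32 A33 A34 A41 A42 A43 A44 *
    blk B11 B12 B13 B14 B21 B22 B23 B24 B31 B32 B33 B34 B41 B42 B43 B44 =
    blk (A11*B11 + (∑ j, A12 j * B21 j) + A13*B31 + ∑ j, A14 j * B41 j)
        (fun k => A11*B12 k + (∑ j, A12 j * B22 j k) + A13*B32 k + ∑ j, A14 j * B42 j k)
        (A11*B13 + (∑ j, A12 j * B23 j) + A13*B33 + ∑ j, A14 j * B43 j)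
        (fun k => A11*B14 k + (∑ j, A12 j * B24 j k) + A13*B34 k + ∑ j, A14 j * B44 j k)
        (fun i => A21 i*B11 + (∑ j, A22 i j * B21 j) + A23 i*B31 + ∑ j, A24 i j * B41 j)
        (fun i k => A21 i*B12 k + (∑ j, A22 i j * B22 j k) + A23 i*B32 k + ∑ j, A24 i j * B42 j k)
        (fun i => A21 i*B13 + (∑ j, A22 i j * B23 j) + A23 i*B33 + ∑ j, A24 i j * B43 j)
        (fun i k => A21 i*B14 k + (∑ j, A22 i j * B24 j k) + A23 i*B34 k + ∑ j, A24 i j * B44 j k)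
        (A31*B11 + (∑ j, A32 j * B21 j) + A33*B31 + ∑ j, A34 j * B41 j)
        (fun k => A31*B12 k + (∑ j, A32 j * B22 j k) + A33*B32 k + ∑ j, A34 j * B42 j k)
        (A31*B13 + (∑ j, A32 j * B23 j) + A33*B33 + ∑ j, A34 j * B43 j)
        (fun k => A31*B14 k + (∑ j, A32 j * B24 j k) + A33*B34 k + ∑ j, A34 j * B44 j k)
        (fun i => A41 i*B11 + (∑ j, A42 i j * B21 j) + A43 i*B31 + ∑ j, A44 i j * B41 j)
        (fun i k => A41 i*B12 k + (∑ j, A42 i j * B22 j k) + A43 i*B32 k + ∑ j, A44 i j * B42 j k)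
        (fun i => A41 i*B13 + (∑ j, A42 i j * B23 j) + A43 i*B33 + ∑ j, A44 i j * B43 j)
        (fun i k => A41 i*B14 k + (∑ j, A42 i j * B24 j k) + A43 i*B34 k + ∑ j, A44 i j * B44 j k) := by
  ext i j
  obtain ((_|i)|(_|i)) := i <;> obtain ((_|j)|(_|j)) := j <;>
    · simp only [Matrix.mul_apply, Fintype.sum_sum_type, Finset.univ_unique,
        Finset.sum_singleton]
      simp [add_assoc]

lemma blk_conjT
    (A11 : ℂ) (A12 : Fin m → ℂ) (A13 : ℂ) (A14 : Fin n → ℂ)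
    (A21 : Fin m → ℂ) (A22 : Fin m → Fin m → ℂ) (A23 : Fin m → ℂ) (A24 : Fin m → Fin n → ℂ)
    (A31 : ℂ) (A32 : Fin m → ℂ) (A33 : ℂ) (A34 : Fin n → ℂ)
    (A41 : Fin n → ℂ) (A42 : Fin n → Fin m → ℂ) (A43 : Fin n → ℂ) (A44 : Fin n → Fin n → ℂ) :
    (blk A11 A12 A13 A14 A21 A22 A23 A24 A31 A32 A33 A34 A41 A42 A43 A44)ᴴ =
    blk (star A11) (fun k => star (A21 k)) (star A31) (fun k => star (A41 k))
        (fun i => star (A12 i)) (fun i k => star (A22 k i)) (fun i => star (A32 i))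
        (fun i k => star (A42 k i))
        (star A13) (fun k => star (A23 k)) (star A33) (fun k => star (A43 k))
        (fun i => star (A14 i)) (fun i k => star (A24 k i)) (fun i => star (A34 i))
        (fun i k => star (A44 k i)) := by
  ext i j
  obtain ((_|i)|(_|i)) := i <;> obtain ((_|j)|(_|j)) := j <;> rfl

lemma blk_congr
    {A11 : ℂ} {A12 : Fin m → ℂ} {A13 : ℂ} {A14 : Fin n → ℂ}
    {A21 : Fin m → ℂ} {A22 : Fin m → Fin m → ℂ} {A23 : Fin m → ℂ} {A24 : Fin m → Fin n → ℂ}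
    {A31 : ℂ} {A32 : Fin m → ℂ} {A33 : ℂ} {A34 : Fin n → ℂ}
    {A41 : Fin n → ℂ} {A42 : Fin n → Fin m → ℂ} {A43 : Fin n → ℂ} {A44 : Fin n → Fin n → ℂ}
    {B11 : ℂ} {B12 : Fin m → ℂ} {B13 : ℂ} {B14 : Fin n → ℂ}
    {B21 : Fin m → ℂ} {B22 : Fin m → Fin m → ℂ} {B23 : Fin m → ℂ} {B24 : Fin m → Fin n → ℂ}
    {B31 : ℂ} {B32 : Fin m → ℂ} {B33 : ℂ} {B34 : Fin n → ℂ}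
    {B41 : Fin n → ℂ} {B42 : Fin n → Fin m → ℂ} {B43 : Fin n → ℂ} {B44 : Fin n → Fin n → ℂ}
    (h11 : A11 = B11) (h12 : ∀ j, A12 j = B12 j) (h13 : A13 = B13) (h14 : ∀ j, A14 j = B14 j)
    (h21 : ∀ i, A21 i = B21 i) (h22 : ∀ i j, A22 i j = B22 i j) (h23 : ∀ i, A23 i = B23 i)
    (h24 : ∀ i j, A24 i j = B24 i j)
    (h31 : A31 = B31) (h32 : ∀ j, A32 j = B32 j) (h33 : A33 = B33) (h34 : ∀ j, A34 j = B34 j)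
    (h41 : ∀ i, A41 i = B41 i) (h42 : ∀ i j, A42 i j = B42 i j) (h43 : ∀ i, A43 i = B43 i)
    (h44 : ∀ i j, A44 i j = B44 i j) :
    blk A11 A12 A13 A14 A21 A22 A23 A24 A31 A32 A33 A34 A41 A42 A43 A44 =
    blk B11 B12 B13 B14 B21 B22 B23 B24 B31 B32 B33 B34 B41 B42 B43 B44 := by
  rw [h11, h13, h31, h33, funext h12, funext h14, funext h21, funext h23, funext h32,
    funext h34, funext h41, funext h43,
    funext fun i => funext (h22 i), funext fun i => funext (h24 i),
    funext fun i => funext (h42 i), funext fun i => funext (h44 i)]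

lemma sum_gram {k : ℕ} (c : ℂ) (v : Fin k → ℂ) (f : Fin k → ℂ)
    (h : ∀ j, f j = c * (star (v j) * v j)) : (∑ j, f j) = c * gram v := by
  rw [_root_.gram, Finset.mul_sum]; exact Finset.sum_congr rfl fun j _ => h j

lemma sum_dotT {k : ℕ} (c : ℂ) (v w : Fin k → ℂ) (f : Fin k → ℂ)
    (h : ∀ j, f j = c * (v j * w j)) : (∑ j, f j) = c * dotT v w := by
  rw [dotT, Finset.mul_sum]; exact Finset.sum_congr rfl fun j _ => h j

lemma gram_star {k : ℕ} (v : Fin k → ℂ) : star (gram v) = gram v := by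
  rw [_root_.gram, star_sum]
  exact Finset.sum_congr rfl fun j _ => by simp [mul_comm]

end DsAux

set_option maxHeartbeats 4000000 in
theorem dsM_dualCoreEP_caseII {m n : ℕ} (a b : ℂ) (ha : a ≠ 0) (hb : b ≠ 0)
    (x y : Fin m → ℂ) (z w : Fin n → ℂ)
    (hxy : dotT x y ≠ 0) (hzw : dotT z w = 0)
    (hζ : dotT x y + a * b ≠ 0)
    (hq : a * star a + gram x ≠ 0)
    (hα : (dotT x y + a * b) * star (dotT x y + a * b) + a * star a * gram z ≠ 0) :
    letI ζ := dotT x y + a * b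
    letI M := dsM a b x y z w
    letI q := a * star a + gram x
    letI α := ζ * star ζ + a * star a * gram z
    letI X := blk 0 (fun j => star ζ * α⁻¹ * x j) (star ζ * α⁻¹ * a) (fun _ => 0)
        (fun i => q⁻¹ * star (x i)) (fun _ _ => 0) (fun _ => 0)
          (fun i j => (q * ζ)⁻¹ * a * star (x i) * z j)
        (star a * q⁻¹) (fun _ => 0) 0 (fun j => (q * ζ)⁻¹ * a * star a * z j)
        (fun _ => 0) (fun i j => star a * α⁻¹ * star (z i) * x j)
          (fun i => a * star a * α⁻¹ * star (z i)) (fun _ _ => 0)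
    M ^ 4 * X = M ^ 3 ∧ X ^ 2 * M = X ∧ (X * M)ᴴ = X * M := by
  set ζ := dotT x y + a * b with hζd
  set q := a * star a + gram x with hqd
  set α := ζ * star ζ + a * star a * gram z with hαd
  set M := dsM a b x y z w with hMd
  have hαs : star α = α := by
    rw [hαd]; simp only [star_add, star_mul', star_star, gram_star]; ring
  have hqs : star q = q := by
    rw [hqd]; simp only [star_add, star_mul', star_star, gram_star]; ring
  have hMblk : M = blk 0 x a (fun _ => 0) y (fun _ _ => 0) (fun _ => 0) (fun _ _ => 0)
      b (fun _ => 0) 0 z (fun _ => 0) (fun _ _ => 0) w (fun _ _ => 0) := by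
    rw [hMd]; rfl
  clear_value M α q ζ
  have sumxy : (∑ j, x j * y j) = dotT x y := rfl
  have sumzw : (∑ j, z j * w j) = (0 : ℂ) := hzw
  have hM2 : M * M = blk ζ (fun _ => 0) 0 (fun k => a * z k)
      (fun _ => 0) (fun i k => y i * x k) (fun i => a * y i) (fun _ _ => 0)
      0 (fun k => b * x k) (a * b) (fun _ => 0)
      (fun i => b * w i) (fun _ _ => 0) (fun _ => 0) (fun i k => w i * z k) := by
    rw [hMblk, blk_mul]
    refine blk_congr ?_ ?_ ?_ ?_ ?_ ?_ ?_ ?_ ?_ ?_ ?_ ?_ ?_ ?_ ?_ ?_ <;> intros <;>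
      (try simp only [mul_assoc, ← Finset.mul_sum, sumxy, sumzw, hζd, zero_mul, mul_zero,
        zero_add, add_zero, Finset.sum_const_zero]) <;> try ring
  have hM3 : blk ζ (fun _ => 0) 0 (fun k => a * z k)
      (fun _ => 0) (fun i k => y i * x k) (fun i => a * y i) (fun _ _ => 0)
      0 (fun k => b * x k) (a * b) (fun _ => 0)
      (fun i => b * w i) (fun _ _ => 0) (fun _ => 0) (fun i k => w i * z k) * M =
      blk 0 (fun k => ζ * x k) (ζ * a) (fun _ => 0)
      (fun i => ζ * y i) (fun _ _ => 0) (fun _ => 0) (fun i k => a * y i * z k)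
      (b * ζ) (fun _ => 0) 0 (fun k => a * b * z k)
      (fun _ => 0) (fun i k => b * w i * x k) (fun i => a * b * w i) (fun _ _ => 0) := by
    rw [hMblk, blk_mul]
    refine blk_congr ?_ ?_ ?_ ?_ ?_ ?_ ?_ ?_ ?_ ?_ ?_ ?_ ?_ ?_ ?_ ?_ <;> intros <;>
      (try simp only [mul_assoc, ← Finset.mul_sum, sumxy, sumzw, hζd, zero_mul, mul_zero,
        zero_add, add_zero, Finset.sum_const_zero]) <;> try ring
  have hM4 : blk 0 (fun k => ζ * x k) (ζ * a) (fun _ => 0)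
      (fun i => ζ * y i) (fun _ _ => 0) (fun _ => 0) (fun i k => a * y i * z k)
      (b * ζ) (fun _ => 0) 0 (fun k => a * b * z k)
      (fun _ => 0) (fun i k => b * w i * x k) (fun i => a * b * w i) (fun _ _ => 0) * M =
      blk (ζ * ζ) (fun _ => 0) 0 (fun k => ζ * a * z k)
      (fun _ => 0) (fun i k => ζ * y i * x k) (fun i => ζ * a * y i) (fun _ _ => 0)
      0 (fun k => b * ζ * x k) (a * b * ζ) (fun _ => 0)
      (fun i => b * ζ * w i) (fun _ _ => 0) (fun _ => 0) (fun i k => a * b * w i * z k) := by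
    rw [hMblk, blk_mul]
    refine blk_congr ?_ ?_ ?_ ?_ ?_ ?_ ?_ ?_ ?_ ?_ ?_ ?_ ?_ ?_ ?_ ?_ <;> intros <;>
      (try simp only [mul_assoc, ← Finset.mul_sum, sumxy, sumzw, hζd, zero_mul, mul_zero,
        zero_add, add_zero, Finset.sum_const_zero]) <;> try ring
  have hM4X : (blk (ζ * ζ) (fun _ => 0) 0 (fun k => ζ * a * z k)
      (fun _ => 0) (fun i k => ζ * y i * x k) (fun i => ζ * a * y i) (fun _ _ => 0)
      0 (fun k => b * ζ * x k) (a * b * ζ) (fun _ => 0)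
      (fun i => b * ζ * w i) (fun _ _ => 0) (fun _ => 0) (fun i k => a * b * w i * z k)) * (blk 0 (fun j => star ζ * α⁻¹ * x j) (star ζ * α⁻¹ * a) (fun _ => 0)
      (fun i => q⁻¹ * star (x i)) (fun _ _ => 0) (fun _ => 0)
      (fun i j => (q * ζ)⁻¹ * a * star (x i) * z j)
      (star a * q⁻¹) (fun _ => 0) 0 (fun j => (q * ζ)⁻¹ * a * star a * z j)
      (fun _ => 0) (fun i j => star a * α⁻¹ * star (z i) * x j)
      (fun i => a * star a * α⁻¹ * star (z i)) (fun _ _ => 0)) = blk 0 (fun k => ζ * x k) (ζ * a) (fun _ => 0)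
      (fun i => ζ * y i) (fun _ _ => 0) (fun _ => 0) (fun i k => a * y i * z k)
      (b * ζ) (fun _ => 0) 0 (fun k => a * b * z k)
      (fun _ => 0) (fun i k => b * w i * x k) (fun i => a * b * w i) (fun _ _ => 0) := by
    rw [blk_mul]
    refine blk_congr ?_ ?_ ?_ ?_ ?_ ?_ ?_ ?_ ?_ ?_ ?_ ?_ ?_ ?_ ?_ ?_
    · intros
      simp only [zero_mul, mul_zero, zero_add, add_zero, Finset.sum_const_zero]
      try ring
    · intro k
      intros
      simp only [zero_mul, mul_zero, zero_add, add_zero, Finset.sum_const_zero]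
      try ring
      rw [sum_gram (ζ * a * (star a * α⁻¹ * x k)) z _ fun j => by ring]
      field_simp [hα]
      rw [hαd]
      simp only [Complex.star_def]
      ring
    · intros
      simp only [zero_mul, mul_zero, zero_add, add_zero, Finset.sum_const_zero]
      try ring
      rw [sum_gram (ζ * a * (a * star a * α⁻¹)) z _ fun j => by ring]
      field_simp [hα]
      rw [hαd]
    · intros
      simp only [zero_mul, mul_zero, zero_add, add_zero, Finset.sum_const_zero]
      try ring
    · intro i
      intros
      simp only [zero_mul, mul_zero, zero_add, add_zero, Finset.sum_const_zero]
      try ring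
      rw [sum_gram (ζ * y i * q⁻¹) x _ fun j => by ring]
      field_simp [hq]
      rw [hqd]
    · intros
      simp only [zero_mul, mul_zero, zero_add, add_zero, Finset.sum_const_zero]
      try ring
    · intros
      simp only [zero_mul, mul_zero, zero_add, add_zero, Finset.sum_const_zero]
      try ring
    · intro i k
      intros
      simp only [zero_mul, mul_zero, zero_add, add_zero, Finset.sum_const_zero]
      try ring
      rw [sum_gram (ζ * y i * ((q * ζ)⁻¹ * a * z k)) x _ fun j => by ring]
      field_simp [hq, hζ]
      rw [hqd]
      simp only [Complex.star_def]
      ring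
    · intros
      simp only [zero_mul, mul_zero, zero_add, add_zero, Finset.sum_const_zero]
      try ring
      rw [sum_gram (b * ζ * q⁻¹) x _ fun j => by ring]
      field_simp [hq]
      rw [hqd]
    · intros
      simp only [zero_mul, mul_zero, zero_add, add_zero, Finset.sum_const_zero]
      try ring
    · intros
      simp only [zero_mul, mul_zero, zero_add, add_zero, Finset.sum_const_zero]
      try ring
    · intro k
      intros
      simp only [zero_mul, mul_zero, zero_add, add_zero, Finset.sum_const_zero]
      try ring
      rw [sum_gram (b * ζ * ((q * ζ)⁻¹ * a * z k)) x _ fun j => by ring]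
      field_simp [hq, hζ]
      rw [hqd]
      simp only [Complex.star_def]
      ring
    · intros
      simp only [zero_mul, mul_zero, zero_add, add_zero, Finset.sum_const_zero]
      try ring
    · intro i k
      intros
      simp only [zero_mul, mul_zero, zero_add, add_zero, Finset.sum_const_zero]
      try ring
      rw [sum_gram (a * b * w i * (star a * α⁻¹ * x k)) z _ fun j => by ring]
      field_simp [hα]
      rw [hαd]
      simp only [Complex.star_def]
      ring
    · intro i
      intros
      simp only [zero_mul, mul_zero, zero_add, add_zero, Finset.sum_const_zero]
      try ring
      rw [sum_gram (a * b * w i * (a * star a * α⁻¹)) z _ fun j => by ring]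
      field_simp [hα]
      rw [hαd]
    · intros
      simp only [zero_mul, mul_zero, zero_add, add_zero, Finset.sum_const_zero]
      try ring
  have hXM : (blk 0 (fun j => star ζ * α⁻¹ * x j) (star ζ * α⁻¹ * a) (fun _ => 0)
      (fun i => q⁻¹ * star (x i)) (fun _ _ => 0) (fun _ => 0)
      (fun i j => (q * ζ)⁻¹ * a * star (x i) * z j)
      (star a * q⁻¹) (fun _ => 0) 0 (fun j => (q * ζ)⁻¹ * a * star a * z j)
      (fun _ => 0) (fun i j => star a * α⁻¹ * star (z i) * x j)
      (fun i => a * star a * α⁻¹ * star (z i)) (fun _ _ => 0)) * M = blk (ζ * star ζ * α⁻¹) (fun _ => 0) 0 (fun k => star ζ * α⁻¹ * a * z k)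
      (fun _ => 0) (fun i k => q⁻¹ * star (x i) * x k) (fun i => q⁻¹ * a * star (x i)) (fun _ _ => 0)
      0 (fun k => star a * q⁻¹ * x k) (a * star a * q⁻¹) (fun _ => 0)
      (fun i => star a * ζ * α⁻¹ * star (z i)) (fun _ _ => 0) (fun _ => 0)
      (fun i k => a * star a * α⁻¹ * star (z i) * z k) := by
    rw [hMblk, blk_mul]
    refine blk_congr ?_ ?_ ?_ ?_ ?_ ?_ ?_ ?_ ?_ ?_ ?_ ?_ ?_ ?_ ?_ ?_
    · intros
      simp only [zero_mul, mul_zero, zero_add, add_zero, Finset.sum_const_zero]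
      try ring
      rw [sum_dotT (star ζ * α⁻¹) x y _ fun j => by ring, hζd]
      ring
    · intros
      simp only [zero_mul, mul_zero, zero_add, add_zero, Finset.sum_const_zero]
      try ring
    · intros
      simp only [zero_mul, mul_zero, zero_add, add_zero, Finset.sum_const_zero]
      try ring
    · intros
      simp only [zero_mul, mul_zero, zero_add, add_zero, Finset.sum_const_zero]
      try ring
    · intros
      simp only [zero_mul, mul_zero, zero_add, add_zero, Finset.sum_const_zero]
      try ring
    · intros
      simp only [zero_mul, mul_zero, zero_add, add_zero, Finset.sum_const_zero]
      try ring
    · intro i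
      intros
      simp only [zero_mul, mul_zero, zero_add, add_zero, Finset.sum_const_zero]
      try ring
      rw [sum_dotT ((q * ζ)⁻¹ * a * star (x i)) z w _ fun j => by ring, hzw]
      ring
    · intros
      simp only [zero_mul, mul_zero, zero_add, add_zero, Finset.sum_const_zero]
      try ring
    · intros
      simp only [zero_mul, mul_zero, zero_add, add_zero, Finset.sum_const_zero]
      try ring
    · intros
      simp only [zero_mul, mul_zero, zero_add, add_zero, Finset.sum_const_zero]
      try ring
    · intros
      simp only [zero_mul, mul_zero, zero_add, add_zero, Finset.sum_const_zero]
      try ring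
      rw [sum_dotT ((q * ζ)⁻¹ * a * star a) z w _ fun j => by ring, hzw]
      ring
    · intros
      simp only [zero_mul, mul_zero, zero_add, add_zero, Finset.sum_const_zero]
      try ring
    · intro i
      intros
      simp only [zero_mul, mul_zero, zero_add, add_zero, Finset.sum_const_zero]
      try ring
      rw [sum_dotT (star a * α⁻¹ * star (z i)) x y _ fun j => by ring, hζd]
      ring
    · intros
      simp only [zero_mul, mul_zero, zero_add, add_zero, Finset.sum_const_zero]
      try ring
    · intros
      simp only [zero_mul, mul_zero, zero_add, add_zero, Finset.sum_const_zero]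
      try ring
    · intros
      simp only [zero_mul, mul_zero, zero_add, add_zero, Finset.sum_const_zero]
      try ring
  have hXP : (blk 0 (fun j => star ζ * α⁻¹ * x j) (star ζ * α⁻¹ * a) (fun _ => 0)
      (fun i => q⁻¹ * star (x i)) (fun _ _ => 0) (fun _ => 0)
      (fun i j => (q * ζ)⁻¹ * a * star (x i) * z j)
      (star a * q⁻¹) (fun _ => 0) 0 (fun j => (q * ζ)⁻¹ * a * star a * z j)
      (fun _ => 0) (fun i j => star a * α⁻¹ * star (z i) * x j)
      (fun i => a * star a * α⁻¹ * star (z i)) (fun _ _ => 0)) * (blk (ζ * star ζ * α⁻¹) (fun _ => 0) 0 (fun k => star ζ * α⁻¹ * a * z k)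
      (fun _ => 0) (fun i k => q⁻¹ * star (x i) * x k) (fun i => q⁻¹ * a * star (x i)) (fun _ _ => 0)
      0 (fun k => star a * q⁻¹ * x k) (a * star a * q⁻¹) (fun _ => 0)
      (fun i => star a * ζ * α⁻¹ * star (z i)) (fun _ _ => 0) (fun _ => 0)
      (fun i k => a * star a * α⁻¹ * star (z i) * z k)) = blk 0 (fun j => star ζ * α⁻¹ * x j) (star ζ * α⁻¹ * a) (fun _ => 0)
      (fun i => q⁻¹ * star (x i)) (fun _ _ => 0) (fun _ => 0)
      (fun i j => (q * ζ)⁻¹ * a * star (x i) * z j)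
      (star a * q⁻¹) (fun _ => 0) 0 (fun j => (q * ζ)⁻¹ * a * star a * z j)
      (fun _ => 0) (fun i j => star a * α⁻¹ * star (z i) * x j)
      (fun i => a * star a * α⁻¹ * star (z i)) (fun _ _ => 0) := by
    rw [blk_mul]
    refine blk_congr ?_ ?_ ?_ ?_ ?_ ?_ ?_ ?_ ?_ ?_ ?_ ?_ ?_ ?_ ?_ ?_
    · intros
      simp only [zero_mul, mul_zero, zero_add, add_zero, Finset.sum_const_zero]
      try ring
    · intro k
      intros
      simp only [zero_mul, mul_zero, zero_add, add_zero, Finset.sum_const_zero]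
      try ring
      rw [sum_gram (star ζ * α⁻¹ * (q⁻¹ * x k)) x _ fun j => by ring]
      field_simp [hq, hα]
      rw [hqd]
      simp only [Complex.star_def]
      ring
    · intros
      simp only [zero_mul, mul_zero, zero_add, add_zero, Finset.sum_const_zero]
      try ring
      rw [sum_gram (star ζ * α⁻¹ * (q⁻¹ * a)) x _ fun j => by ring]
      field_simp [hq, hα]
      rw [hqd]
    · intros
      simp only [zero_mul, mul_zero, zero_add, add_zero, Finset.sum_const_zero]
      try ring
    · intro i
      intros
      simp only [zero_mul, mul_zero, zero_add, add_zero, Finset.sum_const_zero]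
      try ring
      rw [sum_gram ((q * ζ)⁻¹ * a * star (x i) * (star a * ζ * α⁻¹)) z _ fun j => by ring]
      field_simp [hq, hζ, hα]
      rw [hαd]
    · intros
      simp only [zero_mul, mul_zero, zero_add, add_zero, Finset.sum_const_zero]
      try ring
    · intros
      simp only [zero_mul, mul_zero, zero_add, add_zero, Finset.sum_const_zero]
      try ring
    · intro i k
      intros
      simp only [zero_mul, mul_zero, zero_add, add_zero, Finset.sum_const_zero]
      try ring
      rw [sum_gram ((q * ζ)⁻¹ * a * star (x i) * (a * star a * α⁻¹ * z k)) z _ fun j => by ring]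
      field_simp [hq, hζ, hα]
      rw [hαd]
      simp only [Complex.star_def]
      ring
    · intros
      simp only [zero_mul, mul_zero, zero_add, add_zero, Finset.sum_const_zero]
      try ring
      rw [sum_gram ((q * ζ)⁻¹ * a * star a * (star a * ζ * α⁻¹)) z _ fun j => by ring]
      field_simp [hq, hζ, hα]
      rw [hαd]
      simp only [Complex.star_def]
      ring
    · intros
      simp only [zero_mul, mul_zero, zero_add, add_zero, Finset.sum_const_zero]
      try ring
    · intros
      simp only [zero_mul, mul_zero, zero_add, add_zero, Finset.sum_const_zero]
      try ring
    · intro k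
      intros
      simp only [zero_mul, mul_zero, zero_add, add_zero, Finset.sum_const_zero]
      try ring
      rw [sum_gram ((q * ζ)⁻¹ * a * star a * (a * star a * α⁻¹ * z k)) z _ fun j => by ring]
      field_simp [hq, hζ, hα]
      rw [hαd]
      simp only [Complex.star_def]
      ring
    · intros
      simp only [zero_mul, mul_zero, zero_add, add_zero, Finset.sum_const_zero]
      try ring
    · intro i k
      intros
      simp only [zero_mul, mul_zero, zero_add, add_zero, Finset.sum_const_zero]
      try ring
      rw [sum_gram (star a * α⁻¹ * star (z i) * (q⁻¹ * x k)) x _ fun j => by ring]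
      field_simp [hq, hα]
      rw [hqd]
      simp only [Complex.star_def]
      ring
    · intro i
      intros
      simp only [zero_mul, mul_zero, zero_add, add_zero, Finset.sum_const_zero]
      try ring
      rw [sum_gram (star a * α⁻¹ * star (z i) * (q⁻¹ * a)) x _ fun j => by ring]
      field_simp [hq, hα]
      rw [hqd]
      simp only [Complex.star_def]
      ring
    · intros
      simp only [zero_mul, mul_zero, zero_add, add_zero, Finset.sum_const_zero]
      try ring
  have hPH : (blk (ζ * star ζ * α⁻¹) (fun _ => 0) 0 (fun k => star ζ * α⁻¹ * a * z k)
      (fun _ => 0) (fun i k => q⁻¹ * star (x i) * x k) (fun i => q⁻¹ * a * star (x i)) (fun _ _ => 0)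
      0 (fun k => star a * q⁻¹ * x k) (a * star a * q⁻¹) (fun _ => 0)
      (fun i => star a * ζ * α⁻¹ * star (z i)) (fun _ _ => 0) (fun _ => 0)
      (fun i k => a * star a * α⁻¹ * star (z i) * z k))ᴴ = blk (ζ * star ζ * α⁻¹) (fun _ => 0) 0 (fun k => star ζ * α⁻¹ * a * z k)
      (fun _ => 0) (fun i k => q⁻¹ * star (x i) * x k) (fun i => q⁻¹ * a * star (x i)) (fun _ _ => 0)
      0 (fun k => star a * q⁻¹ * x k) (a * star a * q⁻¹) (fun _ => 0)
      (fun i => star a * ζ * α⁻¹ * star (z i)) (fun _ _ => 0) (fun _ => 0)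
      (fun i k => a * star a * α⁻¹ * star (z i) * z k) := by
    rw [blk_conjT]
    refine blk_congr ?_ ?_ ?_ ?_ ?_ ?_ ?_ ?_ ?_ ?_ ?_ ?_ ?_ ?_ ?_ ?_ <;> intros <;>
      (try simp only [star_mul', star_star, star_inv₀, hαs, hqs, star_zero]) <;> try ring
  have e3 : M ^ 3 = M * M * M := by rw [pow_succ, pow_two]
  have e4 : M ^ 4 = M * M * M * M := by rw [pow_succ, e3]
  refine ⟨?_, ?_, ?_⟩
  · rw [e4, e3, hM2, hM3, hM4]
    exact hM4X
  · rw [pow_two, mul_assoc, hXM]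
    exact hXP
  · rw [hXM]
    exact hPH
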